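/- arXiv:2209.03269 — 3 statements merged into one kernel-verified Lean document; each statement's English description precedes it below -/
import Mathlib

section
/- Let B, B̃ ∈ ℝ^{D×d} both have full column rank d, and set E = B − B̃. Then the orthogonal projections onto their column spaces satisfy ‖B B⁺ − B̃ B̃⁺‖ ≤ min{‖E B⁺‖, ‖E B̃⁺‖}, where B⁺ = (BᵀB)^{-1}Bᵀ denotes the Moore–Penrose pseudoinverse and ‖·‖ is the spectral norm. -/
open Matrix
open scoped Matrix.Norms.L2Operator RealInnerProductSpace
set_option linter.unusedSectionVars false

namespace Stmt2Aux

variable {l m n : Type*} [Fintype l] [Fintype m] [Fintype n]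
  [DecidableEq l] [DecidableEq m] [DecidableEq n]

noncomputable def Mv (A : Matrix m n ℝ) (x : EuclideanSpace ℝ n) : EuclideanSpace ℝ m :=
  (EuclideanSpace.equiv m ℝ).symm (A *ᵥ x)

lemma mv_le (A : Matrix m n ℝ) (x : EuclideanSpace ℝ n) : ‖Mv A x‖ ≤ ‖A‖ * ‖x‖ :=
  A.l2_opNorm_mulVec x

lemma norm_le_of_mv (A : Matrix m n ℝ) {K : ℝ} (hK : 0 ≤ K)
    (h : ∀ x : EuclideanSpace ℝ n, ‖Mv A x‖ ≤ K * ‖x‖) : ‖A‖ ≤ K := by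
  rw [Matrix.l2_opNorm_def]
  exact ContinuousLinearMap.opNorm_le_bound _ hK fun x => h x

lemma mv_sub_arg (A : Matrix m n ℝ) (x y : EuclideanSpace ℝ n) :
    Mv A (x - y) = Mv A x - Mv A y := by
  ext i
  simp [Mv, Matrix.mulVec, dotProduct, mul_sub, Finset.sum_sub_distrib]

lemma inner_mv (A : Matrix m n ℝ) (x : EuclideanSpace ℝ n) (y : EuclideanSpace ℝ m) :
    ⟪Mv A x, y⟫ = ⟪x, Mv Aᵀ y⟫ := by
  simp only [Mv, PiLp.inner_apply, RCLike.inner_apply, conj_trivial]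
  show y.ofLp ⬝ᵥ (A *ᵥ x.ofLp) = (Aᵀ *ᵥ y.ofLp) ⬝ᵥ x.ofLp
  rw [dotProduct_mulVec, Matrix.mulVec_transpose]

lemma mv_mul (A : Matrix m n ℝ) (B : Matrix n l ℝ) (x : EuclideanSpace ℝ l) :
    Mv (A * B) x = Mv A (Mv B x) := by
  simp only [Mv, ← Matrix.mulVec_mulVec]
  rfl

lemma mv_one (x : EuclideanSpace ℝ n) : Mv (1 : Matrix n n ℝ) x = x := by
  simp only [Mv]
  show (WithLp.equiv 2 (n → ℝ)).symm ((1 : Matrix n n ℝ) *ᵥ x) = x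
  rw [Matrix.one_mulVec]
  rfl

lemma mv_sub (A B : Matrix m n ℝ) (x : EuclideanSpace ℝ n) :
    Mv (A - B) x = Mv A x - Mv B x := by
  simp [Mv, Matrix.sub_mulVec]


lemma norm_transpose (A : Matrix m n ℝ) : ‖Aᵀ‖ = ‖A‖ := by
  rw [← Matrix.conjTranspose_eq_transpose_of_trivial, Matrix.l2_opNorm_conjTranspose]

lemma norm_sq_mv (A : Matrix m n ℝ) (x : EuclideanSpace ℝ n) :
    ‖Mv A x‖ ^ 2 = ⟪x, Mv (Aᵀ * A) x⟫ := by
  rw [← real_inner_self_eq_norm_sq, inner_mv, mv_mul]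

/-- orthogonality of range and (1 - P)-range for a symmetric idempotent. -/
lemma proj_orth {P : Matrix n n ℝ} (hPt : Pᵀ = P) (hPP : P * P = P)
    (u v : EuclideanSpace ℝ n) : ⟪Mv P u, v - Mv P v⟫ = 0 := by
  rw [inner_mv, hPt, mv_sub_arg, ← mv_mul, hPP, sub_self, inner_zero_right]

lemma proj_pythagoras {P : Matrix n n ℝ} (hPt : Pᵀ = P) (hPP : P * P = P)
    (x : EuclideanSpace ℝ n) :
    ‖x‖ ^ 2 = ‖Mv P x‖ ^ 2 + ‖x - Mv P x‖ ^ 2 := by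
  have h := norm_sub_sq_real (Mv P x) (Mv P x - x)
  have h2 : Mv P x - (Mv P x - x) = x := by abel
  have h3 : ⟪Mv P x, Mv P x - x⟫ = 0 := by
    have h0 := proj_orth hPt hPP x x
    rw [show (Mv P x - x) = -(x - Mv P x) by abel, inner_neg_right, h0, neg_zero]
  rw [h2, h3] at h
  have h4 : ‖Mv P x - x‖ = ‖x - Mv P x‖ := norm_sub_rev _ _
  rw [h] ; rw [h4] ; ring

lemma proj_norm_le_one {P : Matrix n n ℝ} (hPt : Pᵀ = P) (hPP : P * P = P) :
    ‖P‖ ≤ 1 := by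
  refine norm_le_of_mv P zero_le_one fun x => ?_
  rw [one_mul]
  have h1 : ‖Mv P x‖ ^ 2 = ⟪x, Mv P x⟫ := by rw [norm_sq_mv, hPt, hPP]
  have h2 : ⟪x, Mv P x⟫ ≤ ‖x‖ * ‖Mv P x‖ := real_inner_le_norm _ _
  rcases le_or_gt ‖Mv P x‖ 0 with h | h
  · exact h.trans (norm_nonneg x)
  · nlinarith [h1, h2]

/-- the minimum singular value of a square matrix equals that of its transpose:
inequality form. -/
lemma sigma_min (M : Matrix n n ℝ) {c : ℝ} (hc : 0 ≤ c)
    (h : ∀ z : EuclideanSpace ℝ n, c * ‖z‖ ^ 2 ≤ ‖Mv M z‖ ^ 2) :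
    ∀ y : EuclideanSpace ℝ n, c * ‖y‖ ^ 2 ≤ ‖Mv Mᵀ y‖ ^ 2 := by
  rcases eq_or_lt_of_le hc with rfl | hc0
  · intro y; simpa using sq_nonneg ‖Mv Mᵀ y‖
  intro y
  set s := Real.sqrt c with hs
  have hs0 : 0 < s := Real.sqrt_pos.mpr hc0
  have hs2 : s ^ 2 = c := Real.sq_sqrt hc
  -- M is invertible
  have hdet : IsUnit M.det := by
    by_contra hdet
    have : ∃ v : n → ℝ, v ≠ 0 ∧ M *ᵥ v = 0 := by
      rw [Matrix.exists_mulVec_eq_zero_iff]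
      simpa [isUnit_iff_ne_zero] using hdet
    obtain ⟨v, hv0, hv⟩ := this
    have hmv : Mv M ((WithLp.equiv 2 (n → ℝ)).symm v) = 0 := by
      simp only [Mv]
      show (WithLp.equiv 2 (n → ℝ)).symm (M *ᵥ v) = 0
      rw [hv]; rfl
    have := h ((WithLp.equiv 2 (n → ℝ)).symm v)
    rw [hmv] at this
    simp only [norm_zero] at this
    have hvn : (0:ℝ) < ‖(WithLp.equiv 2 (n → ℝ)).symm v‖ ^ 2 := by
      have hne : (WithLp.equiv 2 (n → ℝ)).symm v ≠ 0 := by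
        simpa using hv0
      exact pow_pos (norm_pos_iff.mpr hne) 2
    nlinarith
  have hMN : M * M⁻¹ = 1 := Matrix.mul_nonsing_inv M hdet
  have hNM : M⁻¹ * M = 1 := Matrix.nonsing_inv_mul M hdet
  -- ‖M⁻¹‖ ≤ s⁻¹
  have hNnorm : ‖M⁻¹‖ ≤ s⁻¹ := by
    refine norm_le_of_mv _ (by positivity) fun z => ?_
    have hMz : Mv M (Mv M⁻¹ z) = z := by rw [← mv_mul, hMN, mv_one]
    have := h (Mv M⁻¹ z)
    rw [hMz] at this
    have h1 : s * ‖Mv M⁻¹ z‖ ≤ ‖z‖ := by nlinarith [norm_nonneg (Mv M⁻¹ z), norm_nonneg z]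
    calc ‖Mv M⁻¹ z‖ = s⁻¹ * (s * ‖Mv M⁻¹ z‖) := by field_simp
    _ ≤ s⁻¹ * ‖z‖ := by
        apply mul_le_mul_of_nonneg_left h1 (by positivity)
  -- conclude
  have hid : Mv (M⁻¹)ᵀ (Mv Mᵀ y) = y := by
    rw [← mv_mul, ← Matrix.transpose_mul, hMN, Matrix.transpose_one, mv_one]
  have hbound : ‖y‖ ≤ s⁻¹ * ‖Mv Mᵀ y‖ := by
    calc ‖y‖ = ‖Mv (M⁻¹)ᵀ (Mv Mᵀ y)‖ := by rw [hid]
    _ ≤ ‖(M⁻¹)ᵀ‖ * ‖Mv Mᵀ y‖ := mv_le _ _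
    _ ≤ s⁻¹ * ‖Mv Mᵀ y‖ := by
        apply mul_le_mul_of_nonneg_right _ (norm_nonneg _)
        rw [norm_transpose]; exact hNnorm
  have hsy : s * ‖y‖ ≤ ‖Mv Mᵀ y‖ := by
    calc s * ‖y‖ ≤ s * (s⁻¹ * ‖Mv Mᵀ y‖) := mul_le_mul_of_nonneg_left hbound hs0.le
    _ = ‖Mv Mᵀ y‖ := by field_simp
  have hmul := mul_le_mul hsy hsy (by positivity) (norm_nonneg _)
  nlinarith [hmul, hs2]


lemma mv_eq (A : Matrix m n ℝ) (x : EuclideanSpace ℝ n) :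
    Mv A x = Matrix.toEuclideanLin A x := rfl

lemma mat_ext {A B : Matrix m n ℝ} (h : ∀ x, Mv A x = Mv B x) : A = B := by
  apply Matrix.toEuclideanLin.injective
  exact LinearMap.ext fun x => by rw [← mv_eq, ← mv_eq]; exact h x

lemma rank_eq_finrank (P : Matrix m n ℝ) :
    P.rank = Module.finrank ℝ (LinearMap.range (Matrix.toEuclideanLin P)) := by
  rw [Matrix.rank_eq_finrank_range_toLin P (PiLp.basisFun 2 ℝ m) (PiLp.basisFun 2 ℝ n)]
  rfl

lemma exists_iso {d : ℕ} (P : Matrix n n ℝ) (hPt : Pᵀ = P) (hPP : P * P = P)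
    (hrank : P.rank = d) :
    ∃ C : Matrix n (Fin d) ℝ, Cᵀ * C = 1 ∧ C * Cᵀ = P := by
  classical
  set U := LinearMap.range (Matrix.toEuclideanLin P) with hU
  have hfin : Module.finrank ℝ U = d := by rw [← rank_eq_finrank, hrank]
  let b : OrthonormalBasis (Fin d) ℝ U :=
    (stdOrthonormalBasis ℝ U).reindex (finCongr hfin)
  let C : Matrix n (Fin d) ℝ := fun i j => ((b j : EuclideanSpace ℝ n) i)
  have hPb : ∀ j, Mv P ((b j : EuclideanSpace ℝ n)) = (b j : EuclideanSpace ℝ n) := by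
    intro j
    obtain ⟨w, hw⟩ := (b j).2
    rw [← hw, ← mv_eq, ← mv_mul, hPP]
  have hCt : ∀ (x : EuclideanSpace ℝ n) (j : Fin d),
      Mv Cᵀ x j = ⟪(b j : EuclideanSpace ℝ n), x⟫ := by
    intro x j
    show (Cᵀ *ᵥ x) j = _
    simp [Matrix.mulVec, dotProduct, PiLp.inner_apply, C]
    exact Finset.sum_congr rfl fun _ _ => mul_comm _ _
  refine ⟨C, ?_, ?_⟩
  · ext j k
    have : (Cᵀ * C) j k = ⟪(b j : EuclideanSpace ℝ n), (b k : EuclideanSpace ℝ n)⟫ := by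
      simp [Matrix.mul_apply, Matrix.transpose_apply, PiLp.inner_apply, C]
      exact Finset.sum_congr rfl fun _ _ => mul_comm _ _
    rw [this, ← Submodule.coe_inner, orthonormal_iff_ite.mp b.orthonormal j k,
      Matrix.one_apply]
  · apply mat_ext
    intro x
    have hsum : Mv P x = ∑ j, ⟪(b j : EuclideanSpace ℝ n), x⟫ • (b j : EuclideanSpace ℝ n) := by
      have hmem : Mv P x ∈ U := ⟨x, rfl⟩
      have hrep := b.sum_repr' ⟨Mv P x, hmem⟩
      have hco := congrArg (Subtype.val) hrep
      push_cast at hco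
      rw [← hco]
      refine Finset.sum_congr rfl fun j _ => ?_
      congr 1
      rw [Submodule.coe_inner]
      show ⟪(b j : EuclideanSpace ℝ n), Mv P x⟫ = ⟪(b j : EuclideanSpace ℝ n), x⟫
      have h0 : ⟪(b j : EuclideanSpace ℝ n), x - Mv P x⟫ = 0 := by
        rw [← hPb j]
        exact proj_orth hPt hPP _ x
      rw [@inner_sub_right ℝ] at h0
      linarith
    rw [mv_mul, hsum]
    ext i
    have happ := Finset.sum_apply i Finset.univ
      (fun j => (⟪(b j : EuclideanSpace ℝ n), x⟫ • (b j : EuclideanSpace ℝ n) : EuclideanSpace ℝ n))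
    rw [WithLp.ofLp_sum, happ]
    show (C *ᵥ (Mv Cᵀ x)) i = _
    simp only [Matrix.mulVec, dotProduct, hCt]
    refine Finset.sum_congr rfl fun j _ => ?_
    show C i j * _ = _
    simp [C, mul_comm]

lemma iso_norm_sq {C : Matrix m n ℝ} (hC : Cᵀ * C = 1) (z : EuclideanSpace ℝ n) :
    ‖Mv C z‖ ^ 2 = ‖z‖ ^ 2 := by
  rw [norm_sq_mv, hC, mv_one, real_inner_self_eq_norm_sq]

lemma iso_norm {C : Matrix m n ℝ} (hC : Cᵀ * C = 1) (z : EuclideanSpace ℝ n) :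
    ‖Mv C z‖ = ‖z‖ := by
  have := iso_norm_sq hC z
  nlinarith [norm_nonneg (Mv C z), norm_nonneg z]

lemma iso_op_norm_le {C : Matrix m n ℝ} (hC : Cᵀ * C = 1) : ‖C‖ ≤ 1 := by
  refine norm_le_of_mv C zero_le_one fun z => ?_
  rw [iso_norm hC, one_mul]

lemma inner_mv_mv (A : Matrix m n ℝ) (B : Matrix m l ℝ) (x : EuclideanSpace ℝ n)
    (y : EuclideanSpace ℝ l) : ⟪Mv A x, Mv B y⟫ = ⟪x, Mv (Aᵀ * B) y⟫ :=
  (inner_mv A x _).trans (by rw [← mv_mul])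

/-- key symmetry: for equal-rank symmetric idempotents,
`‖(1-P)Q‖ ≤ ‖(1-Q)P‖`. -/
lemma sym_le {P Q : Matrix n n ℝ} (hPt : Pᵀ = P) (hPP : P * P = P)
    (hQt : Qᵀ = Q) (hQQ : Q * Q = Q) (hrank : P.rank = Q.rank) :
    ‖(1 - P) * Q‖ ≤ ‖(1 - Q) * P‖ := by
  set a := ‖(1 - Q) * P‖ with ha
  have ha0 : (0:ℝ) ≤ a := norm_nonneg _
  have h1Pt : (1 - P)ᵀ = 1 - P := by rw [Matrix.transpose_sub, Matrix.transpose_one, hPt]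
  have h1PP : (1 - P) * (1 - P) = 1 - P := by
    rw [mul_sub, sub_mul, sub_mul, hPP]; noncomm_ring
  have h1Qt : (1 - Q)ᵀ = 1 - Q := by rw [Matrix.transpose_sub, Matrix.transpose_one, hQt]
  have h1QQ : (1 - Q) * (1 - Q) = 1 - Q := by
    rw [mul_sub, sub_mul, sub_mul, hQQ]; noncomm_ring
  rcases le_or_gt 1 a with h1 | h1
  · calc ‖(1 - P) * Q‖ ≤ ‖1 - P‖ * ‖Q‖ := Matrix.l2_opNorm_mul _ _
    _ ≤ 1 * 1 := mul_le_mul (Stmt2Aux.proj_norm_le_one h1Pt h1PP) (proj_norm_le_one hQt hQQ)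
          (norm_nonneg _) zero_le_one
    _ = 1 := one_mul 1
    _ ≤ a := h1
  · obtain ⟨C, hC1, hC2⟩ := exists_iso P hPt hPP (hrank : P.rank = Q.rank)
    obtain ⟨Ct, hCt1, hCt2⟩ := exists_iso Q hQt hQQ rfl
    set M := Ctᵀ * C with hM
    have hPC : P * C = C := by
      rw [← hC2, Matrix.mul_assoc, hC1, Matrix.mul_one]
    have hc0 : (0:ℝ) ≤ 1 - a ^ 2 := by nlinarith
    -- Step A
    have stepA : ∀ z : EuclideanSpace ℝ (Fin Q.rank),
        (1 - a ^ 2) * ‖z‖ ^ 2 ≤ ‖Mv M z‖ ^ 2 := by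
      intro z
      have hmat : (1 - Q) * P * C = C - Ct * M := by
        rw [Matrix.mul_assoc, hPC, Matrix.sub_mul, Matrix.one_mul, hM,
          ← Matrix.mul_assoc, hCt2]
      have hvec : Mv ((1 - Q) * P) (Mv C z) = Mv C z - Mv Ct (Mv M z) := by
        rw [← mv_mul, hmat, mv_sub, mv_mul]
      have hinner : ⟪Mv C z, Mv Ct (Mv M z)⟫ = ‖Mv M z‖ ^ 2 := by
        calc ⟪Mv C z, Mv Ct (Mv M z)⟫ = ⟪Mv Ct (Mv M z), Mv C z⟫ := real_inner_comm _ _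
        _ = ⟪Mv M z, Mv (Ctᵀ * C) z⟫ := inner_mv_mv Ct C _ z
        _ = ‖Mv M z‖ ^ 2 := by rw [← hM, real_inner_self_eq_norm_sq]
      have hnorm : ‖Mv ((1 - Q) * P) (Mv C z)‖ ^ 2 = ‖z‖ ^ 2 - ‖Mv M z‖ ^ 2 := by
        rw [hvec, norm_sub_sq_real, hinner, iso_norm_sq hC1, iso_norm_sq hCt1]
        ring
      have hb : ‖Mv ((1 - Q) * P) (Mv C z)‖ ≤ a * ‖z‖ := by
        calc ‖Mv ((1 - Q) * P) (Mv C z)‖ ≤ a * ‖Mv C z‖ := mv_le _ _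
        _ = a * ‖z‖ := by rw [iso_norm hC1]
      have hbsq : ‖Mv ((1 - Q) * P) (Mv C z)‖ ^ 2 ≤ (a * ‖z‖) ^ 2 :=
        pow_le_pow_left₀ (norm_nonneg _) hb 2
      rw [hnorm] at hbsq
      nlinarith [hbsq]
    have stepB := sigma_min M hc0 stepA
    -- Step C
    refine norm_le_of_mv _ ha0 fun x => ?_
    have hMt : Mᵀ = Cᵀ * Ct := by rw [hM, Matrix.transpose_mul, Matrix.transpose_transpose]
    have hmat2 : (1 - P) * Q = Ct * Ctᵀ - C * (Mᵀ * Ctᵀ) := by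
      rw [Matrix.sub_mul, Matrix.one_mul, hMt,
        show C * (Cᵀ * Ct * Ctᵀ) = (C * Cᵀ) * (Ct * Ctᵀ) by simp only [Matrix.mul_assoc],
        hC2, hCt2]
    have hvec2 : Mv ((1 - P) * Q) x =
        Mv Ct (Mv Ctᵀ x) - Mv C (Mv Mᵀ (Mv Ctᵀ x)) := by
      rw [hmat2, mv_sub, mv_mul, mv_mul, mv_mul]
    have hinner2 : ⟪Mv Ct (Mv Ctᵀ x), Mv C (Mv Mᵀ (Mv Ctᵀ x))⟫ = ‖Mv Mᵀ (Mv Ctᵀ x)‖ ^ 2 := by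
      calc ⟪Mv Ct (Mv Ctᵀ x), Mv C (Mv Mᵀ (Mv Ctᵀ x))⟫
          = ⟪Mv C (Mv Mᵀ (Mv Ctᵀ x)), Mv Ct (Mv Ctᵀ x)⟫ := real_inner_comm _ _
      _ = ⟪Mv Mᵀ (Mv Ctᵀ x), Mv (Cᵀ * Ct) (Mv Ctᵀ x)⟫ := inner_mv_mv C Ct _ _
      _ = ‖Mv Mᵀ (Mv Ctᵀ x)‖ ^ 2 := by rw [← hMt, real_inner_self_eq_norm_sq]
    have hnorm2 : ‖Mv ((1 - P) * Q) x‖ ^ 2 =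
        ‖Mv Ctᵀ x‖ ^ 2 - ‖Mv Mᵀ (Mv Ctᵀ x)‖ ^ 2 := by
      rw [hvec2, norm_sub_sq_real, hinner2, iso_norm_sq hC1, iso_norm_sq hCt1]
      ring
    have hyx : ‖Mv Ctᵀ x‖ ≤ ‖x‖ := by
      calc ‖Mv Ctᵀ x‖ ≤ ‖Ctᵀ‖ * ‖x‖ := mv_le _ _
      _ ≤ 1 * ‖x‖ := by
          apply mul_le_mul_of_nonneg_right _ (norm_nonneg x)
          rw [norm_transpose]; exact iso_op_norm_le hCt1
      _ = ‖x‖ := one_mul _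
    have hfin : ‖Mv ((1 - P) * Q) x‖ ^ 2 ≤ a ^ 2 * ‖x‖ ^ 2 := by
      have h1' := stepB (Mv Ctᵀ x)
      have h2' : ‖Mv Ctᵀ x‖ ^ 2 ≤ ‖x‖ ^ 2 := pow_le_pow_left₀ (norm_nonneg _) hyx 2
      rw [hnorm2]
      nlinarith [h1', h2', sq_nonneg a, mul_le_mul_of_nonneg_left h2' (sq_nonneg a)]
    have h0 : (0:ℝ) ≤ a * ‖x‖ := mul_nonneg ha0 (norm_nonneg _)
    have h2 : ‖Mv ((1 - P) * Q) x‖ ^ 2 ≤ (a * ‖x‖) ^ 2 := by nlinarith [hfin]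
    exact (pow_le_pow_iff_left₀ (norm_nonneg _) h0 two_ne_zero).mp h2

/-- core bound: for equal-rank symmetric idempotents, `‖P - Q‖ ≤ ‖(1-Q)P‖`. -/
lemma core {P Q : Matrix n n ℝ} (hPt : Pᵀ = P) (hPP : P * P = P)
    (hQt : Qᵀ = Q) (hQQ : Q * Q = Q) (hrank : P.rank = Q.rank) :
    ‖P - Q‖ ≤ ‖(1 - Q) * P‖ := by
  set a := ‖(1 - Q) * P‖ with ha
  set b := ‖(1 - P) * Q‖ with hb
  have ha0 : (0:ℝ) ≤ a := norm_nonneg _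
  have hb0 : (0:ℝ) ≤ b := norm_nonneg _
  have hba : b ≤ a := sym_le hPt hPP hQt hQQ hrank
  have h1Qt : (1 - Q)ᵀ = 1 - Q := by rw [Matrix.transpose_sub, Matrix.transpose_one, hQt]
  have h1QQ : (1 - Q) * (1 - Q) = 1 - Q := by
    rw [mul_sub, sub_mul, sub_mul, hQQ]; noncomm_ring
  refine norm_le_of_mv _ ha0 fun x => ?_
  have hdecomp : Mv (P - Q) x =
      Mv (P * (1 - Q)) (Mv (1 - Q) x) - Mv ((1 - P) * Q) (Mv Q x) := by
    rw [← mv_mul, ← mv_mul, ← mv_sub]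
    congr 1
    rw [Matrix.mul_assoc, h1QQ, Matrix.mul_assoc, hQQ]
    noncomm_ring
  have horth : ⟪Mv (P * (1 - Q)) (Mv (1 - Q) x), Mv ((1 - P) * Q) (Mv Q x)⟫ = 0 := by
    have e1 : Mv (P * (1 - Q)) (Mv (1 - Q) x) = Mv P (Mv (1 - Q) (Mv (1 - Q) x)) := by
      rw [mv_mul]
    have e2 : Mv ((1 - P) * Q) (Mv Q x) =
        Mv Q (Mv Q x) - Mv P (Mv Q (Mv Q x)) := by
      rw [mv_mul, mv_sub, mv_one]
    rw [e1, e2]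
    exact proj_orth hPt hPP _ _
  have hpyth := proj_pythagoras hQt hQQ x
  have hxq : Mv (1 - Q) x = x - Mv Q x := by rw [mv_sub, mv_one]
  have hnormdec : ‖Mv (P - Q) x‖ ^ 2 =
      ‖Mv (P * (1 - Q)) (Mv (1 - Q) x)‖ ^ 2 + ‖Mv ((1 - P) * Q) (Mv Q x)‖ ^ 2 := by
    rw [hdecomp, norm_sub_sq_real, horth]; ring
  have hPa : ‖P * (1 - Q)‖ = a := by
    rw [ha, ← norm_transpose ((1 - Q) * P), Matrix.transpose_mul, hPt, h1Qt]
  have hb1 : ‖Mv (P * (1 - Q)) (Mv (1 - Q) x)‖ ≤ a * ‖Mv (1 - Q) x‖ := by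
    rw [← hPa]; exact mv_le _ _
  have hb2 : ‖Mv ((1 - P) * Q) (Mv Q x)‖ ≤ b * ‖Mv Q x‖ := mv_le _ _
  have hsq : ‖Mv (P - Q) x‖ ^ 2 ≤ (a * ‖x‖) ^ 2 := by
    have s1 : ‖Mv (P * (1 - Q)) (Mv (1 - Q) x)‖ ^ 2 ≤ (a * ‖Mv (1 - Q) x‖) ^ 2 :=
      pow_le_pow_left₀ (norm_nonneg _) hb1 2
    have s2 : ‖Mv ((1 - P) * Q) (Mv Q x)‖ ^ 2 ≤ (b * ‖Mv Q x‖) ^ 2 :=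
      pow_le_pow_left₀ (norm_nonneg _) hb2 2
    have s3 : b ^ 2 ≤ a ^ 2 := pow_le_pow_left₀ hb0 hba 2
    have s4 := mul_le_mul_of_nonneg_right s3 (sq_nonneg ‖Mv Q x‖)
    have s6 : ‖Mv (1 - Q) x‖ = ‖x - Mv Q x‖ := by rw [hxq]
    have s5 : a ^ 2 * ‖x‖ ^ 2 =
        a ^ 2 * ‖Mv Q x‖ ^ 2 + a ^ 2 * ‖Mv (1 - Q) x‖ ^ 2 := by rw [s6, hpyth]; ring
    nlinarith [hnormdec, s1, s2, s4, s5]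
  exact (pow_le_pow_iff_left₀ (norm_nonneg _) (mul_nonneg ha0 (norm_nonneg _))
    two_ne_zero).mp hsq


lemma isUnit_of_rank_eq_card {k : ℕ} (A : Matrix (Fin k) (Fin k) ℝ) (h : A.rank = k) :
    IsUnit A := by
  rw [← Matrix.mulVec_surjective_iff_isUnit]
  have htop : LinearMap.range A.mulVecLin = ⊤ := by
    apply Submodule.eq_top_of_finrank_eq
    rw [← Matrix.rank, h, Module.finrank_fin_fun]
  intro y
  obtain ⟨x, hx⟩ := LinearMap.range_eq_top.mp htop y
  exact ⟨x, hx⟩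

end Stmt2Aux

/-- projection perturbation bound.  For full column rank `B`, `B̃`
with pseudoinverses `B⁺ = (BᵀB)⁻¹Bᵀ`, the orthogonal projections onto the column
spaces satisfy `‖B B⁺ − B̃ B̃⁺‖ ≤ min {‖E B⁺‖, ‖E B̃⁺‖}` where `E = B − B̃`. -/
theorem stmt2 (D d : ℕ) (B Bt : Matrix (Fin D) (Fin d) ℝ)
    (hB : B.rank = d) (hBt : Bt.rank = d) :
    ‖B * ((Bᵀ * B)⁻¹ * Bᵀ) - Bt * ((Btᵀ * Bt)⁻¹ * Btᵀ)‖ ≤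
      min ‖(B - Bt) * ((Bᵀ * B)⁻¹ * Bᵀ)‖ ‖(B - Bt) * ((Btᵀ * Bt)⁻¹ * Btᵀ)‖ := by
  have hdet : IsUnit (Bᵀ * B).det := by
    rw [← Matrix.isUnit_iff_isUnit_det]
    exact Stmt2Aux.isUnit_of_rank_eq_card _ (by rw [Matrix.rank_transpose_mul_self, hB])
  have hdet' : IsUnit (Btᵀ * Bt).det := by
    rw [← Matrix.isUnit_iff_isUnit_det]
    exact Stmt2Aux.isUnit_of_rank_eq_card _ (by rw [Matrix.rank_transpose_mul_self, hBt])
  set X := (Bᵀ * B)⁻¹ * Bᵀ with hX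
  set Xt := (Btᵀ * Bt)⁻¹ * Btᵀ with hXt
  set P := B * X with hP
  set Q := Bt * Xt with hQ
  have hPB : P * B = B := by
    rw [hP, hX, Matrix.mul_assoc, Matrix.mul_assoc, Matrix.nonsing_inv_mul _ hdet,
      Matrix.mul_one]
  have hQBt : Q * Bt = Bt := by
    rw [hQ, hXt, Matrix.mul_assoc, Matrix.mul_assoc, Matrix.nonsing_inv_mul _ hdet',
      Matrix.mul_one]
  have hPP : P * P = P := by
    nth_rewrite 2 [hP]
    rw [← Matrix.mul_assoc, hPB, ← hP]
  have hQQ : Q * Q = Q := by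
    nth_rewrite 2 [hQ]
    rw [← Matrix.mul_assoc, hQBt, ← hQ]
  have htr : ∀ A : Matrix (Fin D) (Fin d) ℝ, IsUnit (Aᵀ * A).det →
      (A * ((Aᵀ * A)⁻¹ * Aᵀ))ᵀ = A * ((Aᵀ * A)⁻¹ * Aᵀ) := by
    intro A hd
    rw [Matrix.transpose_mul, Matrix.transpose_mul, Matrix.transpose_transpose,
      Matrix.transpose_nonsing_inv, Matrix.transpose_mul, Matrix.transpose_transpose,
      Matrix.mul_assoc]
  have hPt : Pᵀ = P := by rw [hP, hX]; exact htr B hdet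
  have hQt : Qᵀ = Q := by rw [hQ, hXt]; exact htr Bt hdet'
  have hrankP : P.rank = d := by
    refine le_antisymm ?_ ?_
    · rw [hP]
      exact le_trans (Matrix.rank_mul_le_left B X) (le_of_eq hB)
    · rw [← hB, ← hPB]
      exact Matrix.rank_mul_le_left P B
  have hrankQ : Q.rank = d := by
    refine le_antisymm ?_ ?_
    · rw [hQ]
      exact le_trans (Matrix.rank_mul_le_left Bt Xt) (le_of_eq hBt)
    · rw [← hBt, ← hQBt]
      exact Matrix.rank_mul_le_left Q Bt
  have hrank : P.rank = Q.rank := by rw [hrankP, hrankQ]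
  have h1Qt : (1 - Q)ᵀ = 1 - Q := by rw [Matrix.transpose_sub, Matrix.transpose_one, hQt]
  have h1QQ : (1 - Q) * (1 - Q) = 1 - Q := by
    rw [mul_sub, sub_mul, sub_mul, hQQ]; noncomm_ring
  have h1Pt : (1 - P)ᵀ = 1 - P := by rw [Matrix.transpose_sub, Matrix.transpose_one, hPt]
  have h1PP : (1 - P) * (1 - P) = 1 - P := by
    rw [mul_sub, sub_mul, sub_mul, hPP]; noncomm_ring
  -- first bound
  have hz1 : (1 - Q) * Bt = 0 := by
    rw [Matrix.sub_mul, Matrix.one_mul, hQBt, sub_self]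
  have hi1 : (1 - Q) * (B - Bt) = (1 - Q) * B := by
    rw [Matrix.mul_sub, hz1, sub_zero]
  have he1 : (1 - Q) * P = (1 - Q) * ((B - Bt) * X) := by
    rw [hP, ← Matrix.mul_assoc, ← hi1, Matrix.mul_assoc]
  have hb1 : ‖(1 - Q) * P‖ ≤ ‖(B - Bt) * X‖ := by
    rw [he1]
    calc ‖(1 - Q) * ((B - Bt) * X)‖ ≤ ‖1 - Q‖ * ‖(B - Bt) * X‖ := Matrix.l2_opNorm_mul _ _
    _ ≤ 1 * ‖(B - Bt) * X‖ :=
        mul_le_mul_of_nonneg_right (Stmt2Aux.proj_norm_le_one h1Qt h1QQ) (norm_nonneg _)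
    _ = ‖(B - Bt) * X‖ := one_mul _
  -- second bound
  have hz2 : (1 - P) * B = 0 := by
    rw [Matrix.sub_mul, Matrix.one_mul, hPB, sub_self]
  have hi2 : (1 - P) * (B - Bt) = -((1 - P) * Bt) := by
    rw [Matrix.mul_sub, hz2, zero_sub]
  have hi2' : (1 - P) * Bt = -((1 - P) * (B - Bt)) := by rw [hi2, neg_neg]
  have he2 : (1 - P) * Q = -((1 - P) * ((B - Bt) * Xt)) := by
    rw [hQ, ← Matrix.mul_assoc, hi2', Matrix.neg_mul, Matrix.mul_assoc]
  have hb2 : ‖(1 - P) * Q‖ ≤ ‖(B - Bt) * Xt‖ := by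
    rw [he2, norm_neg]
    calc ‖(1 - P) * ((B - Bt) * Xt)‖ ≤ ‖1 - P‖ * ‖(B - Bt) * Xt‖ := Matrix.l2_opNorm_mul _ _
    _ ≤ 1 * ‖(B - Bt) * Xt‖ :=
        mul_le_mul_of_nonneg_right (Stmt2Aux.proj_norm_le_one h1Pt h1PP) (norm_nonneg _)
    _ = ‖(B - Bt) * Xt‖ := one_mul _
  have hcore1 : ‖P - Q‖ ≤ ‖(1 - Q) * P‖ := Stmt2Aux.core hPt hPP hQt hQQ hrank
  have hcore2 : ‖P - Q‖ ≤ ‖(1 - P) * Q‖ := by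
    rw [norm_sub_rev]
    exact Stmt2Aux.core hQt hQQ hPt hPP hrank.symm
  exact le_min (hcore1.trans hb1) (hcore2.trans hb2)
end

section
/- Let B = [I_d; A] and B̃ = [I_d; Ã] be matrices in ℝ^{D×d} of the stated block form, and suppose ‖B − B̃‖ ≤ ε in spectral norm. Then the orthogonal projections onto their column spaces satisfy ‖B B⁺ − B̃ B̃⁺‖ ≤ ε. -/
open Matrix
open scoped Matrix.Norms.L2Operator
open scoped RealInnerProductSpace

variable {n m : Type*} [Fintype n] [Fintype m] [DecidableEq n] [DecidableEq m]

noncomputable def en (v : n → ℝ) : EuclideanSpace ℝ n := (EuclideanSpace.equiv n ℝ).symm v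

lemma inner_en (v w : n → ℝ) : ⟪en v, en w⟫ = v ⬝ᵥ w := by
  simp [en, PiLp.inner_apply, dotProduct, mul_comm]

lemma norm_sq_en (v : n → ℝ) : ‖en v‖ ^ 2 = v ⬝ᵥ v := by
  rw [← real_inner_self_eq_norm_sq, inner_en]

lemma opnorm_le (M : Matrix m n ℝ) {c : ℝ} (hc : 0 ≤ c)
    (h : ∀ v : n → ℝ, ‖en (M *ᵥ v)‖ ≤ c * ‖en v‖) : ‖M‖ ≤ c := by
  rw [Matrix.l2_opNorm_def]
  refine ContinuousLinearMap.opNorm_le_bound _ hc fun x => ?_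
  simpa [en, Matrix.toEuclideanLin_apply] using h x

lemma mulvec_norm_le (M : Matrix m n ℝ) (v : n → ℝ) : ‖en (M *ᵥ v)‖ ≤ ‖M‖ * ‖en v‖ := by
  simpa [en] using M.l2_opNorm_mulVec ((EuclideanSpace.equiv n ℝ).symm v)

set_option linter.unusedSectionVars false

lemma coer_posdef (B : Matrix m n ℝ) (hcoer : ∀ v : n → ℝ, v ⬝ᵥ v ≤ v ⬝ᵥ ((Bᵀ * B) *ᵥ v)) :
    (Bᵀ * B).PosDef := by
  rw [Matrix.posDef_iff_dotProduct_mulVec]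
  constructor
  · simp [Matrix.IsHermitian, Matrix.conjTranspose_mul, Matrix.conjTranspose_eq_transpose_of_trivial,
      Matrix.transpose_mul]
  · intro x hx
    have h1 : (0:ℝ) < x ⬝ᵥ x := by
      have h0 : (0:ℝ) ≤ x ⬝ᵥ x := by
        simpa using dotProduct_self_star_nonneg (R := ℝ) x
      rcases lt_or_eq_of_le h0 with h | h
      · exact h
      · exact absurd (dotProduct_self_eq_zero.mp h.symm) hx
    simpa using lt_of_lt_of_le h1 (hcoer x)

lemma coer_det (B : Matrix m n ℝ) (hcoer : ∀ v : n → ℝ, v ⬝ᵥ v ≤ v ⬝ᵥ ((Bᵀ * B) *ᵥ v)) :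
    IsUnit (Bᵀ * B).det := isUnit_iff_ne_zero.mpr (coer_posdef B hcoer).det_pos.ne'

lemma BtB_mulvec_dot (B : Matrix m n ℝ) (w : n → ℝ) :
    w ⬝ᵥ ((Bᵀ * B) *ᵥ w) = (B *ᵥ w) ⬝ᵥ (B *ᵥ w) := by
  rw [← Matrix.mulVec_mulVec, Matrix.dotProduct_mulVec, Matrix.vecMul_transpose]

lemma pinvT_bound (B : Matrix m n ℝ) (hcoer : ∀ v : n → ℝ, v ⬝ᵥ v ≤ v ⬝ᵥ ((Bᵀ * B) *ᵥ v))
    (v : n → ℝ) : ‖en ((B * (Bᵀ * B)⁻¹) *ᵥ v)‖ ≤ ‖en v‖ := by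
  set M := Bᵀ * B with hM
  have hMM : M * M⁻¹ = 1 := Matrix.mul_nonsing_inv M (coer_det B hcoer)
  set w := M⁻¹ *ᵥ v with hw
  have hMw : M *ᵥ w = v := by rw [hw, Matrix.mulVec_mulVec, hMM, Matrix.one_mulVec]
  have key : ‖en (B *ᵥ w)‖ ^ 2 = w ⬝ᵥ v := by
    rw [norm_sq_en, ← BtB_mulvec_dot, hMw]
  have hcs : w ⬝ᵥ v ≤ ‖en w‖ * ‖en v‖ := by
    rw [← inner_en]; exact real_inner_le_norm _ _
  have hw_le : ‖en w‖ ≤ ‖en v‖ := by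
    have h1 : ‖en w‖ ^ 2 ≤ w ⬝ᵥ v := by
      rw [norm_sq_en]; calc w ⬝ᵥ w ≤ w ⬝ᵥ (M *ᵥ w) := hcoer w
        _ = w ⬝ᵥ v := by rw [hMw]
    nlinarith [norm_nonneg (en w), norm_nonneg (en v), h1.trans hcs]
  have h2 : ‖en (B *ᵥ w)‖ ^ 2 ≤ ‖en v‖ ^ 2 := by
    rw [key]; calc w ⬝ᵥ v ≤ ‖en w‖ * ‖en v‖ := hcs
      _ ≤ ‖en v‖ * ‖en v‖ := by nlinarith [norm_nonneg (en v)]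
      _ = ‖en v‖ ^ 2 := by ring
  have h3 : (B * M⁻¹) *ᵥ v = B *ᵥ w := by rw [hw, Matrix.mulVec_mulVec]
  rw [h3]
  nlinarith [norm_nonneg (en (B *ᵥ w)), norm_nonneg (en v)]

lemma en_add (a b : n → ℝ) : en (a + b) = en a + en b := rfl
lemma en_sub (a b : n → ℝ) : en (a - b) = en a - en b := rfl

lemma proj_orth (P : Matrix n n ℝ) (hsym : Pᵀ = P) (hidem : P * P = P) (u w : n → ℝ) :
    (P *ᵥ u) ⬝ᵥ (w - P *ᵥ w) = 0 := by
  have h1 : (P *ᵥ u) ⬝ᵥ (w - P *ᵥ w) = u ⬝ᵥ (Pᵀ *ᵥ (w - P *ᵥ w)) := by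
    rw [Matrix.dotProduct_mulVec, Matrix.vecMul_transpose]
  rw [h1, hsym, Matrix.mulVec_sub, Matrix.mulVec_mulVec, hidem, sub_self,
    dotProduct_zero]

lemma pythag (P : Matrix n n ℝ) (hsym : Pᵀ = P) (hidem : P * P = P) (w : n → ℝ) :
    ‖en w‖ ^ 2 = ‖en (P *ᵥ w)‖ ^ 2 + ‖en (w - P *ᵥ w)‖ ^ 2 := by
  have hw : en w = en (P *ᵥ w) + en (w - P *ᵥ w) := by
    have h : P *ᵥ w + (w - P *ᵥ w) = w := by abel
    rw [← en_add, h]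
  rw [hw, norm_add_sq_real, inner_en, proj_orth P hsym hidem]
  ring

lemma proj_contract (P : Matrix n n ℝ) (hsym : Pᵀ = P) (hidem : P * P = P) (w : n → ℝ) :
    ‖en (w - P *ᵥ w)‖ ≤ ‖en w‖ := by
  have := pythag P hsym hidem w
  nlinarith [norm_nonneg (en w), norm_nonneg (en (w - P *ᵥ w)), sq_nonneg ‖en (P *ᵥ w)‖]

lemma pinv_facts (B : Matrix m n ℝ) (hcoer : ∀ v : n → ℝ, v ⬝ᵥ v ≤ v ⬝ᵥ ((Bᵀ * B) *ᵥ v)) :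
    (B * ((Bᵀ * B)⁻¹ * Bᵀ))ᵀ = B * ((Bᵀ * B)⁻¹ * Bᵀ) ∧
    (B * ((Bᵀ * B)⁻¹ * Bᵀ)) * B = B := by
  set M := Bᵀ * B with hM
  have hdet := coer_det B hcoer
  have hMsym : Mᵀ = M := by rw [hM, Matrix.transpose_mul, Matrix.transpose_transpose]
  have hMinvsym : M⁻¹ᵀ = M⁻¹ := by rw [Matrix.transpose_nonsing_inv, hMsym]
  constructor
  · calc (B * (M⁻¹ * Bᵀ))ᵀ = B * (M⁻¹ᵀ * Bᵀ) := by
          rw [Matrix.transpose_mul, Matrix.transpose_mul, Matrix.transpose_transpose,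
            Matrix.mul_assoc]
      _ = B * (M⁻¹ * Bᵀ) := by rw [hMinvsym]
  · calc (B * (M⁻¹ * Bᵀ)) * B = B * (M⁻¹ * M) := by
          rw [Matrix.mul_assoc, Matrix.mul_assoc, hM]
      _ = B := by rw [Matrix.nonsing_inv_mul M hdet, Matrix.mul_one]

lemma pinv_norm_le (B : Matrix m n ℝ) (hcoer : ∀ v : n → ℝ, v ⬝ᵥ v ≤ v ⬝ᵥ ((Bᵀ * B) *ᵥ v)) :
    ‖(Bᵀ * B)⁻¹ * Bᵀ‖ ≤ 1 := by
  set M := Bᵀ * B with hM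
  have hMsym : Mᵀ = M := by rw [hM, Matrix.transpose_mul, Matrix.transpose_transpose]
  have hMinvsym : M⁻¹ᵀ = M⁻¹ := by rw [Matrix.transpose_nonsing_inv, hMsym]
  have h1 : M⁻¹ * Bᵀ = (B * M⁻¹)ᵀ := by
    rw [Matrix.transpose_mul, hMinvsym]
  have h2 : ‖B * M⁻¹‖ ≤ 1 := opnorm_le _ zero_le_one (by
    intro v; rw [one_mul]; exact pinvT_bound B hcoer v)
  calc ‖M⁻¹ * Bᵀ‖ = ‖B * M⁻¹‖ := by
        rw [h1, ← Matrix.conjTranspose_eq_transpose_of_trivial,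
          Matrix.l2_opNorm_conjTranspose]
    _ ≤ 1 := h2

lemma transpose_norm (E : Matrix m n ℝ) : ‖Eᵀ‖ = ‖E‖ := by
  rw [← Matrix.conjTranspose_eq_transpose_of_trivial, Matrix.l2_opNorm_conjTranspose]

lemma block_coer {d e : ℕ} (A : Matrix (Fin e) (Fin d) ℝ)
    (v : Fin d → ℝ) :
    v ⬝ᵥ v ≤ v ⬝ᵥ (((Matrix.fromRows (1 : Matrix (Fin d) (Fin d) ℝ) A)ᵀ *
      Matrix.fromRows (1 : Matrix (Fin d) (Fin d) ℝ) A) *ᵥ v) := by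
  rw [BtB_mulvec_dot, Matrix.fromRows_mulVec, Matrix.one_mulVec,
    sumElim_dotProduct_sumElim]
  have := dotProduct_self_star_nonneg (R := ℝ) (A *ᵥ v)
  simp only [star_trivial] at this
  linarith


set_option maxHeartbeats 1000000 in
/-- for block matrices `B = [I; A]`, `B̃ = [I; Ã]` with
`‖B − B̃‖ ≤ ε`, the orthogonal projections onto their column spaces satisfy
`‖B B⁺ − B̃ B̃⁺‖ ≤ ε`, where `B⁺ = (BᵀB)⁻¹Bᵀ`. -/
theorem stmt3 (D d : ℕ) (hd : 0 < d) (hdD : d < D)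
    (A At : Matrix (Fin (D - d)) (Fin d) ℝ) (ε : ℝ)
    (B Bt : Matrix (Fin d ⊕ Fin (D - d)) (Fin d) ℝ)
    (hB : B = Matrix.fromRows (1 : Matrix (Fin d) (Fin d) ℝ) A)
    (hBt : Bt = Matrix.fromRows (1 : Matrix (Fin d) (Fin d) ℝ) At)
    (hE : ‖B - Bt‖ ≤ ε) :
    ‖B * ((Bᵀ * B)⁻¹ * Bᵀ) - Bt * ((Btᵀ * Bt)⁻¹ * Btᵀ)‖ ≤ ε := by
  have hcoerB : ∀ v : Fin d → ℝ, v ⬝ᵥ v ≤ v ⬝ᵥ ((Bᵀ * B) *ᵥ v) := by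
    rw [hB]; exact block_coer A
  have hcoerBt : ∀ v : Fin d → ℝ, v ⬝ᵥ v ≤ v ⬝ᵥ ((Btᵀ * Bt) *ᵥ v) := by
    rw [hBt]; exact block_coer At
  set P := B * ((Bᵀ * B)⁻¹ * Bᵀ) with hP
  set Q := Bt * ((Btᵀ * Bt)⁻¹ * Btᵀ) with hQ
  obtain ⟨hPsym, hPB⟩ := pinv_facts B hcoerB
  obtain ⟨hQsym, hQBt⟩ := pinv_facts Bt hcoerBt
  rw [← hP] at hPsym hPB
  rw [← hQ] at hQsym hQBt
  have hPP : P * P = P := by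
    calc P * P = (P * B) * ((Bᵀ * B)⁻¹ * Bᵀ) := by rw [hP, ← Matrix.mul_assoc]
      _ = P := by rw [hPB]
  have hQQ : Q * Q = Q := by
    calc Q * Q = (Q * Bt) * ((Btᵀ * Bt)⁻¹ * Btᵀ) := by rw [hQ, ← Matrix.mul_assoc]
      _ = Q := by rw [hQBt]
  have hε0 : 0 ≤ ε := le_trans (norm_nonneg _) hE
  apply opnorm_le _ hε0
  intro x
  set E := B - Bt with hEdef
  set u := x - Q *ᵥ x with hu
  set v := Q *ᵥ x with hv
  set a := P *ᵥ u with ha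
  set b := v - P *ᵥ v with hb
  have hxuv : x = u + v := by rw [hu, hv]; abel
  have hsplit : (P - Q) *ᵥ x = a - b := by
    rw [Matrix.sub_mulVec, ha, hb, hu, hv, Matrix.mulVec_sub]
    abel
  -- Btᵀ *ᵥ u = 0
  have hBtQ : Btᵀ * Q = Btᵀ := by
    have : (Q * Bt)ᵀ = Btᵀ * Qᵀ := Matrix.transpose_mul _ _
    rw [hQBt] at this
    rw [← hQsym, ← this]
  have hBtu : Btᵀ *ᵥ u = 0 := by
    rw [hu, Matrix.mulVec_sub, hv, Matrix.mulVec_mulVec, hBtQ, sub_self]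
  have hBu : Bᵀ *ᵥ u = Eᵀ *ᵥ u := by
    have hBE : Bᵀ = Eᵀ + Btᵀ := by
      rw [hEdef, Matrix.transpose_sub]; abel
    rw [hBE, Matrix.add_mulVec, hBtu, add_zero]
  have hau : a = (B * (Bᵀ * B)⁻¹) *ᵥ (Eᵀ *ᵥ u) := by
    rw [ha, hP, ← Matrix.mulVec_mulVec, ← hBu, Matrix.mulVec_mulVec, Matrix.mulVec_mulVec,
      Matrix.mul_assoc]
  have hAnorm : ‖en a‖ ≤ ε * ‖en u‖ := by
    calc ‖en a‖ ≤ ‖en (Eᵀ *ᵥ u)‖ := by rw [hau]; exact pinvT_bound B hcoerB _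
      _ ≤ ‖Eᵀ‖ * ‖en u‖ := mulvec_norm_le _ _
      _ = ‖E‖ * ‖en u‖ := by rw [transpose_norm]
      _ ≤ ε * ‖en u‖ := by
          have := norm_nonneg (en u)
          nlinarith
  -- bound b
  set z := ((Btᵀ * Bt)⁻¹ * Btᵀ) *ᵥ v with hz
  have hzv : Bt *ᵥ z = v := by
    have h0 : Bt *ᵥ z = Q *ᵥ v := by rw [hz, hQ, Matrix.mulVec_mulVec]
    rw [h0, hv, Matrix.mulVec_mulVec, hQQ]
  have hbw : b = -((E *ᵥ z) - P *ᵥ (E *ᵥ z)) := by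
    have h1 : E *ᵥ z = B *ᵥ z - v := by rw [hEdef, Matrix.sub_mulVec, hzv]
    have h2 : P *ᵥ (E *ᵥ z) = B *ᵥ z - P *ᵥ v := by
      rw [h1, Matrix.mulVec_sub, Matrix.mulVec_mulVec, hPB]
    rw [hb, h2, h1]; abel
  have hznorm : ‖en z‖ ≤ ‖en v‖ := by
    calc ‖en z‖ ≤ ‖(Btᵀ * Bt)⁻¹ * Btᵀ‖ * ‖en v‖ := mulvec_norm_le _ _
      _ ≤ 1 * ‖en v‖ := by
          have := norm_nonneg (en v)
          nlinarith [pinv_norm_le Bt hcoerBt]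
      _ = ‖en v‖ := one_mul _
  have hBnorm : ‖en b‖ ≤ ε * ‖en v‖ := by
    have h1 : ‖en b‖ = ‖en ((E *ᵥ z) - P *ᵥ (E *ᵥ z))‖ := by
      rw [hbw]
      show ‖en (-(E *ᵥ z - P *ᵥ (E *ᵥ z)))‖ = _
      have : en (-(E *ᵥ z - P *ᵥ (E *ᵥ z))) = -en (E *ᵥ z - P *ᵥ (E *ᵥ z)) := rfl
      rw [this, norm_neg]
    calc ‖en b‖ = ‖en ((E *ᵥ z) - P *ᵥ (E *ᵥ z))‖ := h1
      _ ≤ ‖en (E *ᵥ z)‖ := proj_contract P hPsym hPP _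
      _ ≤ ‖E‖ * ‖en z‖ := mulvec_norm_le _ _
      _ ≤ ε * ‖en v‖ := by
          have h2 := norm_nonneg (en z)
          have h3 := norm_nonneg E
          nlinarith
  -- orthogonality
  have horth_ab : ⟪en a, en b⟫ = 0 := by
    rw [inner_en, ha, hb]; exact proj_orth P hPsym hPP u v
  have horth_uv : ⟪en u, en v⟫ = 0 := by
    rw [inner_en, dotProduct_comm, hu, hv]
    exact proj_orth Q hQsym hQQ x x
  have hxsq : ‖en x‖ ^ 2 = ‖en u‖ ^ 2 + ‖en v‖ ^ 2 := by
    rw [hxuv, en_add, norm_add_sq_real, horth_uv]; ring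
  have habsq : ‖en ((P - Q) *ᵥ x)‖ ^ 2 = ‖en a‖ ^ 2 + ‖en b‖ ^ 2 := by
    rw [hsplit, en_sub, norm_sub_sq_real, horth_ab]; ring
  have hfinal : ‖en ((P - Q) *ᵥ x)‖ ^ 2 ≤ (ε * ‖en x‖) ^ 2 := by
    rw [habsq]
    have h4 : (ε * ‖en x‖) ^ 2 = ε ^ 2 * (‖en u‖ ^ 2 + ‖en v‖ ^ 2) := by
      rw [← hxsq]; ring
    rw [h4]
    nlinarith [norm_nonneg (en a), norm_nonneg (en b), norm_nonneg (en u), norm_nonneg (en v)]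
  have hnn : 0 ≤ ε * ‖en x‖ := mul_nonneg hε0 (norm_nonneg _)
  nlinarith [norm_nonneg (en ((P - Q) *ᵥ x)), hnn, hfinal]
end

section
/- Let f : ℝ^D → ℝ satisfy the descent inequality |f(y) − f(x) − ⟨∇f(x), y − x⟩| ≤ (L/2)‖y − x‖² on a convex set C, and let R : T → ℝ^D satisfy, for a fixed r ∈ C with R(0) = r: (i) ‖R(ξ) − r‖ ≤ α‖ξ‖, (ii) ‖R(ξ) − r − ξ − v(ξ)‖ ≤ β‖ξ‖², and (iii) ⟨∇f(r), ξ + v(ξ)⟩ = ⟨g, ξ + v(ξ)⟩ where g = Π(∇f(r)) for an orthogonal projection Π with ξ + v(ξ) in its range, and suppose ‖∇f(r)‖ ≤ G. Then for all ξ with R(ξ) ∈ C and ‖ξ‖ ≤ Q: |f(R(ξ)) − f(r) − ⟨g, ξ + v(ξ)⟩| ≤ (L̃/2)‖ξ‖² with L̃ = L·α² + 2G·β. -/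
/-- Lemma 3.7, Lipschitz-type gradient for pullbacks: under the
descent inequality for `f` on a convex set `C`, the retraction bounds (i),(ii)
and the projection identity (iii) with `g = Π(∇f r)` and `‖∇f r‖ ≤ G`, the
pullback satisfies `|f(R ξ) − f(r) − ⟨g, ξ + v(ξ)⟩| ≤ (L̃/2)‖ξ‖²` with
`L̃ = Lα² + 2Gβ`, for all `ξ` with `R ξ ∈ C` and `‖ξ‖ ≤ Q`. -/
theorem stmt12 (D : ℕ) (C : Set (EuclideanSpace ℝ (Fin D)))
    (hC : Convex ℝ C)
    (f : EuclideanSpace ℝ (Fin D) → ℝ)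
    (f' : EuclideanSpace ℝ (Fin D) → EuclideanSpace ℝ (Fin D))
    (L α β G Q : ℝ) (hL : 0 ≤ L) (hα : 0 < α) (hβ : 0 < β)
    (hG : 0 < G) (hQ : 0 < Q)
    (hdesc : ∀ x ∈ C, ∀ y ∈ C,
      |f y - f x - (inner ℝ (f' x) (y - x) : ℝ)| ≤ L / 2 * ‖y - x‖ ^ 2)
    (R : EuclideanSpace ℝ (Fin D) → EuclideanSpace ℝ (Fin D))
    (v : EuclideanSpace ℝ (Fin D) → EuclideanSpace ℝ (Fin D))
    (r : EuclideanSpace ℝ (Fin D)) (hr : r ∈ C) (hR0 : R 0 = r)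
    (P : EuclideanSpace ℝ (Fin D) →L[ℝ] EuclideanSpace ℝ (Fin D))
    (hPidem : P ∘L P = P)
    (hPsa : ∀ x y, (inner ℝ (P x) y : ℝ) = inner ℝ x (P y))
    (g : EuclideanSpace ℝ (Fin D)) (hg : g = P (f' r))
    (hi : ∀ ξ, ‖R ξ - r‖ ≤ α * ‖ξ‖)
    (hii : ∀ ξ, ‖R ξ - r - ξ - v ξ‖ ≤ β * ‖ξ‖ ^ 2)
    (hiii : ∀ ξ, (inner ℝ (f' r) (ξ + v ξ) : ℝ) = inner ℝ g (ξ + v ξ))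
    (hgrad : ‖f' r‖ ≤ G) :
    ∀ ξ, R ξ ∈ C → ‖ξ‖ ≤ Q →
      |f (R ξ) - f r - (inner ℝ g (ξ + v ξ) : ℝ)| ≤
        (L * α ^ 2 + 2 * G * β) / 2 * ‖ξ‖ ^ 2 := by
  intro ξ hRC hξQ
  have h1 := hdesc r hr (R ξ) hRC
  have key : f (R ξ) - f r - (inner ℝ g (ξ + v ξ) : ℝ)
      = (f (R ξ) - f r - (inner ℝ (f' r) (R ξ - r) : ℝ))
        + (inner ℝ (f' r) (R ξ - r - ξ - v ξ) : ℝ) := by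
    rw [← hiii ξ]
    have : R ξ - r - ξ - v ξ = (R ξ - r) - (ξ + v ξ) := by abel
    simp only [this, inner_sub_right]
    ring
  rw [key]
  have h2 : |(inner ℝ (f' r) (R ξ - r - ξ - v ξ) : ℝ)| ≤ G * (β * ‖ξ‖ ^ 2) := by
    calc |(inner ℝ (f' r) (R ξ - r - ξ - v ξ) : ℝ)| ≤ ‖f' r‖ * ‖R ξ - r - ξ - v ξ‖ :=
          abs_real_inner_le_norm _ _
      _ ≤ G * (β * ‖ξ‖ ^ 2) := by
          apply mul_le_mul hgrad (hii ξ) (norm_nonneg _) hG.le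
  have h3 : |f (R ξ) - f r - (inner ℝ (f' r) (R ξ - r) : ℝ)| ≤ L / 2 * (α * ‖ξ‖) ^ 2 := by
    refine h1.trans ?_
    have := hi ξ
    have h4 : ‖R ξ - r‖ ^ 2 ≤ (α * ‖ξ‖) ^ 2 :=
      pow_le_pow_left₀ (norm_nonneg _) this 2
    nlinarith
  calc |(f (R ξ) - f r - (inner ℝ (f' r) (R ξ - r) : ℝ))
        + (inner ℝ (f' r) (R ξ - r - ξ - v ξ) : ℝ)|
      ≤ |f (R ξ) - f r - (inner ℝ (f' r) (R ξ - r) : ℝ)|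
        + |(inner ℝ (f' r) (R ξ - r - ξ - v ξ) : ℝ)| := abs_add_le _ _
    _ ≤ L / 2 * (α * ‖ξ‖) ^ 2 + G * (β * ‖ξ‖ ^ 2) := add_le_add h3 h2
    _ = (L * α ^ 2 + 2 * G * β) / 2 * ‖ξ‖ ^ 2 := by ring
end
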